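/- Fix L ≥ 1, λ > 0, and real numbers h_1,…,h_L with h_l > 0 for all l and Σ_{l=1}^{L} h_l < 1. Define T_1 = (1/λ)·log(1 + h_1/(1 − (h_1 + ⋯ + h_L))) and T_l = (1/λ)·log(1 + h_l/h_{l−1}) for l = 2,…,L. Then T_l > 0 for all l, and the MCDP hit probabilities computed from these timers recover h: for every l ∈ {1,…,L}, ∏_{j=1}^{l}(e^{λ T_j} − 1) / (1 + Σ_{k=1}^{L} ∏_{j=1}^{k}(e^{λ T_j} − 1)) = h_l. -/

import Mathlib

/-- Inverse change of variables for MCDP (equation (7) of the paper): given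
hit probabilities `h_1, …, h_L > 0` with `∑ h_l < 1`, the timers
`T_1 = (1/λ)log(1 + h_1/(1 - ∑_l h_l))` and
`T_l = (1/λ)log(1 + h_l/h_{l-1})` for `l = 2, …, L` are positive and the MCDP
stationary hit probabilities computed from them recover `h`. -/
theorem stmt_13 (L : ℕ) (hL : 1 ≤ L) (lam : ℝ) (hlam : 0 < lam)
    (h : ℕ → ℝ) (hpos : ∀ l, 1 ≤ l → l ≤ L → 0 < h l)
    (hsum : ∑ l ∈ Finset.Icc 1 L, h l < 1)
    (T : ℕ → ℝ)
    (hT1 : T 1 = (1 / lam) *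
        Real.log (1 + h 1 / (1 - ∑ l ∈ Finset.Icc 1 L, h l)))
    (hTl : ∀ l, 2 ≤ l → l ≤ L →
        T l = (1 / lam) * Real.log (1 + h l / h (l - 1))) :
    (∀ l, 1 ≤ l → l ≤ L → 0 < T l) ∧
    (∀ l, 1 ≤ l → l ≤ L →
      (∏ j ∈ Finset.Icc 1 l, (Real.exp (lam * T j) - 1)) /
        (1 + ∑ k ∈ Finset.Icc 1 L, ∏ j ∈ Finset.Icc 1 k,
          (Real.exp (lam * T j) - 1)) = h l) := by
  set S := ∑ l ∈ Finset.Icc 1 L, h l with hS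
  have hD : 0 < 1 - S := by linarith
  have hlam' : lam ≠ 0 := ne_of_gt hlam
  have h1pos : 0 < h 1 := hpos 1 le_rfl hL
  have harg1 : 0 < h 1 / (1 - S) := div_pos h1pos hD
  have hE1 : Real.exp (lam * T 1) - 1 = h 1 / (1 - S) := by
    rw [hT1, show lam * (1 / lam * Real.log (1 + h 1 / (1 - S)))
        = Real.log (1 + h 1 / (1 - S)) by field_simp,
      Real.exp_log (by linarith)]
    ring
  have hEl : ∀ l, 2 ≤ l → l ≤ L →
      Real.exp (lam * T l) - 1 = h l / h (l - 1) := by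
    intro l hl2 hlL
    have hprev : 0 < h (l - 1) := hpos (l - 1) (by omega) (by omega)
    have hcur : 0 < h l := hpos l (by omega) hlL
    have harg : 0 < h l / h (l - 1) := div_pos hcur hprev
    rw [hTl l hl2 hlL, show lam * (1 / lam * Real.log (1 + h l / h (l - 1)))
        = Real.log (1 + h l / h (l - 1)) by field_simp,
      Real.exp_log (by linarith)]
    ring
  have hprod : ∀ l, 1 ≤ l → l ≤ L →
      ∏ j ∈ Finset.Icc 1 l, (Real.exp (lam * T j) - 1) = h l / (1 - S) := by
    intro l
    induction l with
    | zero => omega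
    | succ n ih =>
      intro h1 h2
      rcases Nat.lt_or_ge n 1 with hn | hn
      · have : n = 0 := by omega
        subst this
        simp [Finset.Icc_self, hE1]
      · have hn1 : n ≤ L := by omega
        rw [Finset.prod_Icc_succ_top (by omega), ih hn hn1,
          hEl (n + 1) (by omega) h2]
        have hneq : h n ≠ 0 := (hpos n hn hn1).ne'
        have hDne : (1 - S) ≠ 0 := hD.ne'
        have : n + 1 - 1 = n := rfl
        rw [this]
        field_simp
  have hden : 1 + ∑ k ∈ Finset.Icc 1 L, ∏ j ∈ Finset.Icc 1 k,
      (Real.exp (lam * T j) - 1) = 1 / (1 - S) := by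
    rw [Finset.sum_congr rfl fun k hk => hprod k (Finset.mem_Icc.mp hk).1
      (Finset.mem_Icc.mp hk).2]
    rw [← Finset.sum_div, ← hS]
    field_simp
    ring
  constructor
  · intro l hl1 hlL
    rcases Nat.lt_or_ge l 2 with hl | hl
    · have : l = 1 := by omega
      subst this
      rw [hT1]
      have : 0 < Real.log (1 + h 1 / (1 - S)) := Real.log_pos (by linarith)
      positivity
    · have hprev : 0 < h (l - 1) := hpos (l - 1) (by omega) (by omega)
      have hcur : 0 < h l := hpos l (by omega) hlL
      have harg : 0 < h l / h (l - 1) := div_pos hcur hprev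
      rw [hTl l hl hlL]
      have : 0 < Real.log (1 + h l / h (l - 1)) := Real.log_pos (by linarith)
      positivity
  · intro l hl1 hlL
    rw [hprod l hl1 hlL, hden]
    field_simp
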